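/- arXiv:1102.2588 — 2 statements merged into one kernel-verified Lean document; each statement's English description precedes it below -/
import Mathlib

section
/- Under the constraints Γ = a² (i.e., α₁²+α₂²+α₃² = a²) with a = 1 and L = M₁α₁+M₂α₂+M₃α₃ = 0, the integrals satisfy the identity K = F + 4bH - b², where H = (M₁²+M₂²)/2 + M₃² + (c(α₁²-α₂²) + b/α₃²)/2 with c = 1, F = [M₁²-M₂² - b(α₁²-α₂²)/α₃² + α₃²]² + 4[M₁M₂ - bα₁α₂/α₃²]², and K = [M₁²+M₂²+b/α₃²]² + 2α₃²(M₁²-M₂²) + α₃⁴. -/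
theorem stmt_1 (M₁ M₂ M₃ α₁ α₂ α₃ b : ℝ) (hα₃ : α₃ ≠ 0)
    (hΓ : α₁^2 + α₂^2 + α₃^2 = 1)
    (hL : M₁*α₁ + M₂*α₂ + M₃*α₃ = 0)
    (H F K : ℝ)
    (hH : H = (M₁^2 + M₂^2)/2 + M₃^2 + ((α₁^2 - α₂^2) + b/α₃^2)/2)
    (hF : F = (M₁^2 - M₂^2 - b*(α₁^2 - α₂^2)/α₃^2 + α₃^2)^2
            + 4*(M₁*M₂ - b*α₁*α₂/α₃^2)^2)
    (hK : K = (M₁^2 + M₂^2 + b/α₃^2)^2 + 2*α₃^2*(M₁^2 - M₂^2) + α₃^4) :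
    K = F + 4*b*H - b^2 := by
  have hM₃ : M₃ = -(M₁*α₁ + M₂*α₂)/α₃ := by
    field_simp
    linarith
  subst hH hF hK hM₃
  have ht : α₃^2 ≠ 0 := pow_ne_zero 2 hα₃
  field_simp
  linear_combination (-(4*(M₁^2+M₂^2)*α₃^2*b + 2*b^2*(1 - α₃^2 + α₁^2 + α₂^2))) * hΓ
end

section
/- The discriminant set of the polynomial W(u) = (1/b)(2b+k-u²)(2b-k+u²)((u-b)²-f²) in the (k,f)-plane (the set of (k,f) for which W has a repeated root, for fixed b > 0, f ≥ 0) is contained in the union of the three lines k = 2b, k = -2b, f = 0 and the four parabolas k = ±2b + (f±b)². More precisely: W has a multiple real root iff k = 2b, or k = -2b, or f = 0, or k = 2b+(f-b)², or k = 2b+(f+b)², or k = -2b+(f-b)², or k = -2b+(f+b)². -/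
lemma W_deriv (b k f : ℝ) (u : ℂ) :
    deriv (fun v : ℂ =>
        (1/(b:ℂ)) * (((2*b + k : ℝ):ℂ) - v^2) * (((2*b - k : ℝ) : ℂ) + v^2)
          * ((v - (b : ℂ))^2 - ((f : ℝ) : ℂ)^2)) u =
    (1/(b:ℂ)) * (-(2*u)) * (((2*b - k : ℝ):ℂ) + u^2) * ((u - (b:ℂ))^2 - ((f:ℝ):ℂ)^2)
    + (1/(b:ℂ)) * (((2*b + k : ℝ):ℂ) - u^2) * (2*u) * ((u - (b:ℂ))^2 - ((f:ℝ):ℂ)^2)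
    + (1/(b:ℂ)) * (((2*b + k : ℝ):ℂ) - u^2) * (((2*b - k : ℝ):ℂ) + u^2) * (2*(u - (b:ℂ))) := by
  have h2 : HasDerivAt (fun v : ℂ => v^2) (2*u) u := by simpa using hasDerivAt_pow 2 u
  have hA : HasDerivAt (fun v : ℂ => ((2*b + k : ℝ):ℂ) - v^2) (-(2*u)) u := h2.const_sub _
  have hB : HasDerivAt (fun v : ℂ => ((2*b - k : ℝ):ℂ) + v^2) (2*u) u := h2.const_add _
  have h3 : HasDerivAt (fun v : ℂ => (v - (b:ℂ))^2 - ((f:ℝ):ℂ)^2) (2*(u - (b:ℂ))) u := by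
    have := (((hasDerivAt_id u).sub_const (b:ℂ)).pow 2).sub_const (((f:ℝ):ℂ)^2)
    simpa using this
  have h := ((hA.const_mul (1/(b:ℂ))).mul hB).mul h3
  have h' : HasDerivAt (fun v : ℂ =>
        (1/(b:ℂ)) * (((2*b + k : ℝ):ℂ) - v^2) * (((2*b - k : ℝ) : ℂ) + v^2)
          * ((v - (b : ℂ))^2 - ((f : ℝ) : ℂ)^2)) _ u := h
  rw [h'.deriv]
  simp only [Pi.mul_apply]
  ring

lemma help13 (b k f : ℝ) (u : ℂ)
    (h1 : 2*(b:ℂ) + (k:ℂ) - u^2 = 0)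
    (h3 : (u - (b:ℂ))^2 - (f:ℂ)^2 = 0) :
    k = -2*b + (f - b)^2 ∨ k = -2*b + (f + b)^2 := by
  have hfac : (u - ((b:ℂ) + f)) * (u - ((b:ℂ) - f)) = 0 := by linear_combination h3
  rcases mul_eq_zero.mp hfac with h | h
  · right
    have hu : u = (b:ℂ) + f := by linear_combination h
    subst hu
    have : ((k:ℝ):ℂ) = ((-2*b + (f + b)^2 : ℝ):ℂ) := by push_cast; linear_combination h1
    exact_mod_cast this
  · left
    have hu : u = (b:ℂ) - f := by linear_combination h
    subst hu
    have : ((k:ℝ):ℂ) = ((-2*b + (f - b)^2 : ℝ):ℂ) := by push_cast; linear_combination h1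
    exact_mod_cast this

lemma help23 (b k f : ℝ) (u : ℂ)
    (h2 : 2*(b:ℂ) - (k:ℂ) + u^2 = 0)
    (h3 : (u - (b:ℂ))^2 - (f:ℂ)^2 = 0) :
    k = 2*b + (f - b)^2 ∨ k = 2*b + (f + b)^2 := by
  have hfac : (u - ((b:ℂ) + f)) * (u - ((b:ℂ) - f)) = 0 := by linear_combination h3
  rcases mul_eq_zero.mp hfac with h | h
  · right
    have hu : u = (b:ℂ) + f := by linear_combination h
    subst hu
    have : ((k:ℝ):ℂ) = ((2*b + (f + b)^2 : ℝ):ℂ) := by push_cast; linear_combination -h2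
    exact_mod_cast this
  · left
    have hu : u = (b:ℂ) - f := by linear_combination h
    subst hu
    have : ((k:ℝ):ℂ) = ((2*b + (f - b)^2 : ℝ):ℂ) := by push_cast; linear_combination -h2
    exact_mod_cast this

theorem stmt_13 (b k f : ℝ) (hb : 0 < b) (hf : 0 ≤ f) :
    (∃ u : ℂ,
      (let W : ℂ → ℂ := fun v =>
        (1/(b:ℂ)) * ((2*b + k : ℝ) - v^2) * (((2*b - k : ℝ) : ℂ) + v^2)
          * ((v - (b : ℂ))^2 - ((f : ℝ) : ℂ)^2);
       W u = 0 ∧ deriv W u = 0)) ↔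
    (k = 2*b ∨ k = -2*b ∨ f = 0 ∨
     k = 2*b + (f - b)^2 ∨ k = 2*b + (f + b)^2 ∨
     k = -2*b + (f - b)^2 ∨ k = -2*b + (f + b)^2) := by
  have hbC : (b:ℂ) ≠ 0 := by exact_mod_cast hb.ne'
  have hc : (1/(b:ℂ)) ≠ 0 := one_div_ne_zero hbC
  constructor
  · rintro ⟨u, hW, hD⟩
    rw [W_deriv b k f u] at hD
    push_cast at hW hD
    have hW' : ((2*(b:ℂ) + k - u^2) * (2*b - k + u^2)) * ((u - b)^2 - (f:ℂ)^2) = 0 := by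
      have h0 : (1/(b:ℂ)) * (((2*(b:ℂ) + k - u^2) * (2*b - k + u^2)) * ((u - b)^2 - (f:ℂ)^2)) = 0 := by
        linear_combination hW
      exact (mul_eq_zero.mp h0).resolve_left hc
    have hD' : (-(2*u)) * (2*(b:ℂ) - k + u^2) * ((u - b)^2 - (f:ℂ)^2)
        + (2*(b:ℂ) + k - u^2) * (2*u) * ((u - b)^2 - (f:ℂ)^2)
        + (2*(b:ℂ) + k - u^2) * (2*(b:ℂ) - k + u^2) * (2*(u - b)) = 0 := by
      have h0 : (1/(b:ℂ)) * ((-(2*u)) * (2*(b:ℂ) - k + u^2) * ((u - b)^2 - (f:ℂ)^2)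
        + (2*(b:ℂ) + k - u^2) * (2*u) * ((u - b)^2 - (f:ℂ)^2)
        + (2*(b:ℂ) + k - u^2) * (2*(b:ℂ) - k + u^2) * (2*(u - b))) = 0 := by
        linear_combination hD
      exact (mul_eq_zero.mp h0).resolve_left hc
    rcases mul_eq_zero.mp hW' with h12 | h3
    · rcases mul_eq_zero.mp h12 with h1 | h2
      · -- P1 = 0
        have hred : (-(2*u)) * ((2*(b:ℂ) - k + u^2) * ((u - b)^2 - (f:ℂ)^2)) = 0 := by
          linear_combination hD' - ((2*u) * ((u - b)^2 - (f:ℂ)^2) + (2*(b:ℂ) - k + u^2) * (2*(u - b))) * h1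
        rcases mul_eq_zero.mp hred with hu | h23
        · have hu0 : u = 0 := by simpa using hu
          subst hu0
          right; left
          have : ((k:ℝ):ℂ) = ((-2*b : ℝ):ℂ) := by push_cast; linear_combination h1
          exact_mod_cast this
        · rcases mul_eq_zero.mp h23 with h2 | h3
          · exfalso
            have : ((4*b : ℝ):ℂ) = 0 := by push_cast; linear_combination h1 + h2
            have hb0 : (4:ℝ)*b = 0 := by exact_mod_cast this
            linarith
          · rcases help13 b k f u h1 h3 with h | h
            · exact Or.inr (Or.inr (Or.inr (Or.inr (Or.inr (Or.inl h)))))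
            · exact Or.inr (Or.inr (Or.inr (Or.inr (Or.inr (Or.inr h)))))
      · -- P2 = 0
        have hred : (2*u) * ((2*(b:ℂ) + k - u^2) * ((u - b)^2 - (f:ℂ)^2)) = 0 := by
          linear_combination hD' + ((2*u) * ((u - b)^2 - (f:ℂ)^2) - (2*(b:ℂ) + k - u^2) * (2*(u - b))) * h2
        rcases mul_eq_zero.mp hred with hu | h13
        · have hu0 : u = 0 := by simpa using hu
          subst hu0
          left
          have : ((k:ℝ):ℂ) = ((2*b : ℝ):ℂ) := by push_cast; linear_combination -h2
          exact_mod_cast this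
        · rcases mul_eq_zero.mp h13 with h1 | h3
          · exfalso
            have : ((4*b : ℝ):ℂ) = 0 := by push_cast; linear_combination h1 + h2
            have hb0 : (4:ℝ)*b = 0 := by exact_mod_cast this
            linarith
          · rcases help23 b k f u h2 h3 with h | h
            · exact Or.inr (Or.inr (Or.inr (Or.inl h)))
            · exact Or.inr (Or.inr (Or.inr (Or.inr (Or.inl h))))
    · -- P3 = 0
      have hred : ((2*(b:ℂ) + k - u^2) * (2*(b:ℂ) - k + u^2)) * (2*(u - b)) = 0 := by
        linear_combination hD' - ((-(2*u)) * (2*(b:ℂ) - k + u^2) + (2*(b:ℂ) + k - u^2) * (2*u)) * h3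
      rcases mul_eq_zero.mp hred with h12 | hub
      · rcases mul_eq_zero.mp h12 with h1 | h2
        · rcases help13 b k f u h1 h3 with h | h
          · exact Or.inr (Or.inr (Or.inr (Or.inr (Or.inr (Or.inl h)))))
          · exact Or.inr (Or.inr (Or.inr (Or.inr (Or.inr (Or.inr h)))))
        · rcases help23 b k f u h2 h3 with h | h
          · exact Or.inr (Or.inr (Or.inr (Or.inl h)))
          · exact Or.inr (Or.inr (Or.inr (Or.inr (Or.inl h))))
      · -- u = b ⇒ f = 0
        right; right; left
        have hub' : u = (b:ℂ) := by
          have h0 : u - (b:ℂ) = 0 := by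
            rcases mul_eq_zero.mp hub with h | h
            · norm_num at h
            · exact h
          linear_combination h0
        subst hub'
        have hf2 : ((f:ℝ):ℂ)^2 = 0 := by linear_combination -h3
        have hf0 : ((f:ℝ):ℂ) = 0 := by
          simpa using hf2
        exact_mod_cast hf0
  · intro h
    rcases h with h | h | h | h | h | h | h
    all_goals subst h
    · exact ⟨0, by push_cast; ring, by rw [W_deriv]; push_cast; ring⟩
    · exact ⟨0, by push_cast; ring, by rw [W_deriv]; push_cast; ring⟩
    · exact ⟨(b:ℂ), by push_cast; ring, by rw [W_deriv]; push_cast; ring⟩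
    · exact ⟨((b - f : ℝ):ℂ), by push_cast; ring, by rw [W_deriv]; push_cast; ring⟩
    · exact ⟨((b + f : ℝ):ℂ), by push_cast; ring, by rw [W_deriv]; push_cast; ring⟩
    · exact ⟨((b - f : ℝ):ℂ), by push_cast; ring, by rw [W_deriv]; push_cast; ring⟩
    · exact ⟨((b + f : ℝ):ℂ), by push_cast; ring, by rw [W_deriv]; push_cast; ring⟩
end
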